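/- arXiv:1202.0100 — 3 statements merged into one kernel-verified Lean document; each statement's English description precedes it below -/
import Mathlib

section
/- Let Σ be an n×n real symmetric positive definite matrix, X an n×m real matrix with Xᵀ Σ⁻¹ X invertible, and C a q×m real matrix. Set M = C (Xᵀ Σ⁻¹ X)⁻¹. Then for every q×n real matrix A satisfying the unbiasedness condition A X = C, the variance decomposition A Σ Aᵀ = (A − M Xᵀ Σ⁻¹) Σ (A − M Xᵀ Σ⁻¹)ᵀ + M (Xᵀ Σ⁻¹ X) Mᵀ holds. -/
open Matrix

/-- Variance decomposition: for `M = C (Xᵀ S⁻¹ X)⁻¹` (with `S` the symmetric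
positive definite matrix Σ and `Xᵀ S⁻¹ X` invertible), every matrix `A` with
`A X = C` (unbiasedness) satisfies
`A S Aᵀ = (A − M Xᵀ S⁻¹) S (A − M Xᵀ S⁻¹)ᵀ + M (Xᵀ S⁻¹ X) Mᵀ`. -/
theorem stmt_8 {n m q : ℕ} (S : Matrix (Fin n) (Fin n) ℝ) (hS : S.PosDef)
    (X : Matrix (Fin n) (Fin m) ℝ) (hinv : IsUnit (Xᵀ * S⁻¹ * X))
    (C : Matrix (Fin q) (Fin m) ℝ) (M : Matrix (Fin q) (Fin m) ℝ)
    (hM : M = C * (Xᵀ * S⁻¹ * X)⁻¹) :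
    ∀ A : Matrix (Fin q) (Fin n) ℝ, A * X = C →
      A * S * Aᵀ =
        (A - M * Xᵀ * S⁻¹) * S * (A - M * Xᵀ * S⁻¹)ᵀ +
          M * (Xᵀ * S⁻¹ * X) * Mᵀ := by
  intro A hA
  have hSdet : IsUnit S.det := isUnit_iff_ne_zero.mpr hS.det_pos.ne'
  have hSinv : S⁻¹ * S = 1 := nonsing_inv_mul S hSdet
  have hST : Sᵀ = S := by
    have := hS.isHermitian.eq
    simpa [Matrix.conjTranspose, Matrix.transpose, Matrix.map, starRingEnd_apply] using this
  have hSinvT : S⁻¹ᵀ = S⁻¹ := by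
    rw [transpose_nonsing_inv, hST]
  have hG : (Xᵀ * S⁻¹ * X)⁻¹ * (Xᵀ * S⁻¹ * X) = 1 :=
    nonsing_inv_mul _ ((isUnit_iff_isUnit_det _).mp hinv)
  have hMG : M * (Xᵀ * S⁻¹ * X) = C := by
    rw [hM, Matrix.mul_assoc, hG, Matrix.mul_one]
  have hGT : (Xᵀ * S⁻¹ * X)ᵀ = Xᵀ * S⁻¹ * X := by
    rw [transpose_mul, transpose_mul, transpose_transpose, hSinvT,
      ← Matrix.mul_assoc]
  have h1 : M * (Xᵀ * S⁻¹ * X) * Mᵀ = C * Mᵀ := by rw [hMG]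
  have h2 : M * (Xᵀ * S⁻¹ * X) * Mᵀ = M * Cᵀ := by
    rw [Matrix.mul_assoc, ← hGT, ← transpose_mul, hMG]
  have hCM : C * Mᵀ = M * Cᵀ := h1.symm.trans h2
  set B := M * Xᵀ * S⁻¹ with hB
  have hBS : B * S = M * Xᵀ := by
    rw [hB, Matrix.mul_assoc (M * Xᵀ), hSinv, Matrix.mul_one]
  have hBSA : B * S * Aᵀ = M * Cᵀ := by
    rw [hBS, Matrix.mul_assoc, ← transpose_mul, hA]
  have hASB : A * S * Bᵀ = C * Mᵀ := by
    have := congrArg Matrix.transpose hBSA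
    simpa [transpose_mul, hST, Matrix.mul_assoc] using this
  have hBT : Bᵀ = S⁻¹ * (X * Mᵀ) := by
    rw [hB, transpose_mul, transpose_mul, transpose_transpose, hSinvT]
  have hBSB : B * S * Bᵀ = M * (Xᵀ * S⁻¹ * X) * Mᵀ := by
    rw [hBS, hBT, Matrix.mul_assoc M, Matrix.mul_assoc M, Matrix.mul_assoc Xᵀ,
      Matrix.mul_assoc Xᵀ, Matrix.mul_assoc S⁻¹]
  have expand : (A - B) * S * (A - B)ᵀ =
      A * S * Aᵀ - A * S * Bᵀ - B * S * Aᵀ + B * S * Bᵀ := by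
    rw [transpose_sub, Matrix.sub_mul, Matrix.sub_mul, Matrix.mul_sub,
      Matrix.mul_sub]
    abel
  rw [expand, hASB, hBSA, hBSB, h2, hCM]
  abel
end

section
/- (Uniqueness in the Modified Gauss–Markov theorem.) Let Σ be an n×n real symmetric positive definite matrix, X an n×m real matrix with Xᵀ Σ⁻¹ X invertible, and C a q×m real matrix. If a q×n real matrix A satisfies A X = C and A Σ Aᵀ = C (Xᵀ Σ⁻¹ X)⁻¹ Cᵀ, then A = C (Xᵀ Σ⁻¹ X)⁻¹ Xᵀ Σ⁻¹. -/
open Matrix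

lemma aux_posdef_conj_zero {n q : ℕ} {S : Matrix (Fin n) (Fin n) ℝ} (hS : S.PosDef)
    {M : Matrix (Fin q) (Fin n) ℝ} (h : M * S * Mᵀ = 0) : M = 0 := by
  have key : ∀ i, M i = 0 := by
    intro i
    by_contra hrow
    have hpos := hS.dotProduct_mulVec_pos hrow
    have hdiag : (M * S * Mᵀ) i i = star (M i) ⬝ᵥ S *ᵥ (M i) := by
      simp only [mul_apply, transpose_apply, dotProduct, mulVec, star_trivial,
        Finset.sum_mul, Finset.mul_sum]
      rw [Finset.sum_comm]
      congr 1; ext k; congr 1; ext l; ring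
    rw [h] at hdiag
    simp only [Matrix.zero_apply] at hdiag
    rw [← hdiag] at hpos
    exact lt_irrefl _ hpos
  ext i j
  rw [key i]
  rfl

/-- Uniqueness in the Modified Gauss–Markov theorem: if `A X = C` and
`A S Aᵀ = C (Xᵀ S⁻¹ X)⁻¹ Cᵀ` (with `S` the symmetric positive definite matrix
Σ and `Xᵀ S⁻¹ X` invertible), then `A = C (Xᵀ S⁻¹ X)⁻¹ Xᵀ S⁻¹`. -/
theorem stmt_10 {n m q : ℕ} (S : Matrix (Fin n) (Fin n) ℝ) (hS : S.PosDef)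
    (X : Matrix (Fin n) (Fin m) ℝ) (hinv : IsUnit (Xᵀ * S⁻¹ * X))
    (C : Matrix (Fin q) (Fin m) ℝ) (A : Matrix (Fin q) (Fin n) ℝ)
    (hAX : A * X = C)
    (hvar : A * S * Aᵀ = C * (Xᵀ * S⁻¹ * X)⁻¹ * Cᵀ) :
    A = C * (Xᵀ * S⁻¹ * X)⁻¹ * Xᵀ * S⁻¹ := by
  set G := Xᵀ * S⁻¹ * X with hG
  have hSdet : IsUnit S.det := isUnit_iff_ne_zero.mpr hS.det_pos.ne'
  have hGdet : IsUnit G.det := (Matrix.isUnit_iff_isUnit_det _).mp hinv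
  have hSsymm : Sᵀ = S := hS.isHermitian
  have hSinvsymm : (S⁻¹)ᵀ = S⁻¹ := by rw [transpose_nonsing_inv, hSsymm]
  have hGsymm : Gᵀ = G := by
    rw [hG, transpose_mul, transpose_mul, transpose_transpose, hSinvsymm, Matrix.mul_assoc]
  have hGinvsymm : (G⁻¹)ᵀ = G⁻¹ := by rw [transpose_nonsing_inv, hGsymm]
  have hSinvS : S⁻¹ * S = 1 := nonsing_inv_mul S hSdet
  have hSSinv : S * S⁻¹ = 1 := mul_nonsing_inv S hSdet
  have hGinvG : G⁻¹ * G = 1 := nonsing_inv_mul G hGdet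
  set B := C * G⁻¹ * Xᵀ * S⁻¹ with hB
  have hBS : B * S = C * G⁻¹ * Xᵀ := by
    rw [hB, Matrix.mul_assoc, hSinvS, Matrix.mul_one]
  have hBSAT : B * S * Aᵀ = C * G⁻¹ * Cᵀ := by
    rw [hBS, Matrix.mul_assoc, ← transpose_mul, hAX, Matrix.mul_assoc]
  have hBT : Bᵀ = S⁻¹ * X * G⁻¹ * Cᵀ := by
    rw [hB, transpose_mul, transpose_mul, transpose_mul, hSinvsymm, hGinvsymm,
      transpose_transpose]
    simp only [Matrix.mul_assoc]
  have hASBT : A * S * Bᵀ = C * G⁻¹ * Cᵀ := by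
    rw [hBT]
    calc A * S * (S⁻¹ * X * G⁻¹ * Cᵀ) = A * (S * S⁻¹) * X * G⁻¹ * Cᵀ := by
          simp only [Matrix.mul_assoc]
    _ = A * X * G⁻¹ * Cᵀ := by rw [hSSinv, Matrix.mul_one]
    _ = C * G⁻¹ * Cᵀ := by rw [hAX, Matrix.mul_assoc]
  have hBSBT : B * S * Bᵀ = C * G⁻¹ * Cᵀ := by
    rw [hBS, hBT]
    calc C * G⁻¹ * Xᵀ * (S⁻¹ * X * G⁻¹ * Cᵀ)
        = C * (G⁻¹ * (Xᵀ * S⁻¹ * X)) * G⁻¹ * Cᵀ := by simp only [Matrix.mul_assoc]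
    _ = C * (G⁻¹ * G) * G⁻¹ * Cᵀ := by rw [← hG]
    _ = C * G⁻¹ * Cᵀ := by rw [hGinvG, Matrix.mul_one, Matrix.mul_assoc]
  have hzero : (A - B) * S * (A - B)ᵀ = 0 := by
    have expand : (A - B) * S * (A - B)ᵀ = A * S * Aᵀ - A * S * Bᵀ - B * S * Aᵀ + B * S * Bᵀ := by
      rw [transpose_sub]
      simp only [Matrix.sub_mul, Matrix.mul_sub]
      abel
    rw [expand, hvar, hASBT, hBSAT, hBSBT, Matrix.mul_assoc]
    abel
  have hAB : A = B := sub_eq_zero.mp (aux_posdef_conj_zero hS hzero)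
  rw [hAB, hB]
end

section
/- Let q ≥ 1 and let α_1, …, α_q be real numbers; set α_j = 0 for j > q. Define the interim multipliers (β_k)_{k≥0} recursively by β_0 = 1 and β_k = Σ_{j=1}^{k} β_{k−j} α_j for k ≥ 1. If r := |α_1| + |α_2| + ⋯ + |α_q| < 1, then |β_k| ≤ r^{⌈k/q⌉} for every k ≥ 0; consequently the series Σ_{k=0}^{∞} β_k converges absolutely, so the long-run multiplier φ_∞ = Σ_{k=0}^{∞} β_k is finite (bounded). -/
lemma my_ceil_zero (q : ℕ) : (⌈((0:ℕ) : ℚ) / (q : ℚ)⌉).toNat = 0 := by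
  simp

lemma my_ceil_pos (q k : ℕ) (hq : 1 ≤ q) (hk : 1 ≤ k) :
    1 ≤ (⌈(k : ℚ) / (q : ℚ)⌉).toNat := by
  have h : (0 : ℤ) < ⌈(k : ℚ) / (q : ℚ)⌉ := by
    rw [Int.ceil_pos]
    positivity
  omega

lemma my_ceil_step (q k j : ℕ) (hq : 1 ≤ q) (hjq : j ≤ q) (hjk : j ≤ k) :
    (⌈(k : ℚ) / (q : ℚ)⌉).toNat ≤ (⌈((k - j : ℕ) : ℚ) / (q : ℚ)⌉).toNat + 1 := by
  have hqQ : (0 : ℚ) < (q : ℚ) := by positivity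
  have h : ⌈(k : ℚ) / (q : ℚ)⌉ ≤ ⌈((k - j : ℕ) : ℚ) / (q : ℚ)⌉ + 1 := by
    rw [← Int.ceil_add_one]
    apply Int.ceil_le_ceil
    rw [div_add' _ _ _ (ne_of_gt hqQ), div_le_div_iff_of_pos_right hqQ]
    have : ((k - j : ℕ) : ℚ) = (k : ℚ) - (j : ℚ) := by
      push_cast [hjk]; ring
    rw [this]
    have : (j : ℚ) ≤ (q : ℚ) := by exact_mod_cast hjq
    linarith
  omega

lemma my_div_le_ceil (q k : ℕ) :
    k / q ≤ (⌈(k : ℚ) / (q : ℚ)⌉).toNat := by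
  have h1 : ((k / q : ℕ) : ℚ) ≤ (k : ℚ) / (q : ℚ) := by
    apply Nat.cast_div_le
  have h2 : ((k / q : ℕ) : ℤ) ≤ ⌈(k : ℚ) / (q : ℚ)⌉ := by
    rw [← Int.ceil_natCast (R := ℚ) (k / q)]
    exact Int.ceil_le_ceil h1
  omega

/-- If `r = |α_1| + ⋯ + |α_q| < 1`, then the interim multipliers `β_k`
(defined by `β_0 = 1` and `β_k = Σ_{j=1}^{k} β_{k−j} α_j`, where `α_j = 0` for
`j > q`) satisfy `|β_k| ≤ r^⌈k/q⌉` for every `k`; consequently the series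
`Σ_{k=0}^∞ β_k` converges absolutely, so the long-run multiplier is finite. -/
theorem stmt_13 (q : ℕ) (hq : 1 ≤ q) (α : ℕ → ℝ) (hα : ∀ j, q < j → α j = 0)
    (β : ℕ → ℝ) (hβ0 : β 0 = 1)
    (hβ : ∀ k, 1 ≤ k → β k = ∑ j ∈ Finset.Icc 1 k, β (k - j) * α j)
    (r : ℝ) (hr : r = ∑ j ∈ Finset.Icc 1 q, |α j|) (hr1 : r < 1) :
    (∀ k : ℕ, |β k| ≤ r ^ (⌈(k : ℚ) / (q : ℚ)⌉.toNat)) ∧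
      Summable fun k => |β k| := by
  have hr0 : 0 ≤ r := by
    rw [hr]; exact Finset.sum_nonneg fun j _ => abs_nonneg _
  -- sum of |α| over Icc 1 k is ≤ r for any k
  have hsum_le : ∀ k : ℕ, ∑ j ∈ Finset.Icc 1 k, |α j| ≤ r := by
    intro k
    rcases le_or_gt k q with h | h
    · rw [hr]
      apply Finset.sum_le_sum_of_subset_of_nonneg
      · exact Finset.Icc_subset_Icc le_rfl h
      · intro j _ _; exact abs_nonneg _
    · rw [hr]
      refine le_of_eq (Finset.sum_subset (Finset.Icc_subset_Icc le_rfl h.le) ?_).symm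
      intro j hj hj'
      simp only [Finset.mem_Icc] at hj hj'
      rw [hα j (by omega), abs_zero]
  have key : ∀ k : ℕ, |β k| ≤ r ^ (⌈(k : ℚ) / (q : ℚ)⌉.toNat) := by
    intro k
    induction k using Nat.strong_induction_on with
    | _ k ih =>
      rcases Nat.eq_zero_or_pos k with rfl | hk
      · rw [hβ0, my_ceil_zero]; simp
      · have hc1 : 1 ≤ (⌈(k : ℚ) / (q : ℚ)⌉).toNat := my_ceil_pos q k hq hk
        rw [hβ k hk]
        calc |∑ j ∈ Finset.Icc 1 k, β (k - j) * α j|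
            ≤ ∑ j ∈ Finset.Icc 1 k, |β (k - j) * α j| := Finset.abs_sum_le_sum_abs _ _
          _ ≤ ∑ j ∈ Finset.Icc 1 k, r ^ ((⌈(k : ℚ) / (q : ℚ)⌉).toNat - 1) * |α j| := by
              apply Finset.sum_le_sum
              intro j hj
              simp only [Finset.mem_Icc] at hj
              rw [abs_mul]
              rcases le_or_gt j q with hjq | hjq
              · apply mul_le_mul_of_nonneg_right _ (abs_nonneg _)
                have hlt : k - j < k := by omega
                have h1 := ih (k - j) hlt
                have h2 : (⌈(k : ℚ) / (q : ℚ)⌉).toNat - 1 ≤ (⌈((k - j : ℕ) : ℚ) / (q : ℚ)⌉).toNat :=by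
                  have := my_ceil_step q k j hq hjq hj.2
                  omega
                exact h1.trans (pow_le_pow_of_le_one hr0 hr1.le h2)
              · rw [hα j hjq, abs_zero, mul_zero]
                positivity
          _ = r ^ ((⌈(k : ℚ) / (q : ℚ)⌉).toNat - 1) * ∑ j ∈ Finset.Icc 1 k, |α j| := by
              rw [Finset.mul_sum]
          _ ≤ r ^ ((⌈(k : ℚ) / (q : ℚ)⌉).toNat - 1) * r := by
              apply mul_le_mul_of_nonneg_left (hsum_le k) (by positivity)
          _ = r ^ ((⌈(k : ℚ) / (q : ℚ)⌉).toNat) := by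
              rw [← pow_succ]
              congr 1
              omega
  refine ⟨key, ?_⟩
  haveI : NeZero q := ⟨by omega⟩
  have hg : Summable fun k : ℕ => r ^ (k / q) := by
    rw [← (Nat.divModEquiv q).symm.summable_iff]
    have he : ((fun k : ℕ => r ^ (k / q)) ∘ (Nat.divModEquiv q).symm) =
        fun p : ℕ × Fin q => r ^ p.1 := by
      funext p
      simp only [Function.comp_apply, Nat.divModEquiv_symm_apply]
      congr 1
      rw [Nat.mul_comm, Nat.mul_add_div (by omega), Nat.div_eq_of_lt p.2.isLt, add_zero]
    rw [he, summable_prod_of_nonneg (fun p => by positivity)]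
    refine ⟨fun b => Summable.of_finite, ?_⟩
    have : (fun b : ℕ => ∑' _ : Fin q, r ^ b) = fun b => (q : ℝ) * r ^ b := by
      funext b
      rw [tsum_const]
      simp [nsmul_eq_mul]
    rw [this]
    exact (summable_geometric_of_lt_one hr0 hr1).mul_left _
  apply Summable.of_nonneg_of_le (fun k => abs_nonneg _) _ hg
  intro k
  exact (key k).trans (pow_le_pow_of_le_one hr0 hr1.le (my_div_le_ceil q k))
end
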